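/- Let M be a quaternary matroid and let A be any GF(4)-representation of M with row space determining L = ker(A). Then the matroid of the bicycle space BC_L = L ∩ inv(L^⊥) equals max(M+V), the set system of maximal members of the loop complementation of M on all of V. In particular, the matroid M(BC_L) does not depend on the chosen representation A of M, and a quaternary matroid M has an odd number of bases if and only if its bicycle space has dimension zero. -/

import Mathlib

open Matrix
open scoped symmDiff

variable {V : Type} [Fintype V] [DecidableEq V]

/-- principal submatrix of A indexed by X -/
def pSub {F : Type} [Field F] (A : Matrix V V F) (X : Finset V) : Matrix X X F :=
  Matrix.of fun i j => A i.1 j.1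

open scoped Classical in
/-- the set system of index sets of nonsingular principal submatrices of A -/
noncomputable def MA {F : Type} [Field F] (A : Matrix V V F) : Finset (Finset V) :=
  Finset.univ.filter (fun X => (pSub A X).det ≠ 0)

/-- pivot (twist) of a set system on X -/
def pivotOp (E : Finset (Finset V)) (X : Finset V) : Finset (Finset V) :=
  E.image (fun Y => Y ∆ X)

/-- loop complementation of a set system on u -/
def loopC (E : Finset (Finset V)) (u : V) : Finset (Finset V) :=
  E ∆ ((E.filter (fun Y => u ∉ Y)).image (fun Y => insert u Y))

/-- apply a sequence of vertex flips: `Sum.inl u` is pivot *u,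
`Sum.inr u` is loop complementation +u -/
def applyFlips (E : Finset (Finset V)) (φ : List (V ⊕ V)) : Finset (Finset V) :=
  φ.foldl (fun E op => match op with
    | Sum.inl u => pivotOp E {u}
    | Sum.inr u => loopC E u) E

/-- a delta-matroid: a nonempty set system satisfying symmetric exchange -/
def IsDeltaMatroid (E : Finset (Finset V)) : Prop :=
  E.Nonempty ∧ ∀ X ∈ E, ∀ Y ∈ E, ∀ u ∈ X ∆ Y,
    X ∆ ({u} : Finset V) ∈ E ∨ ∃ v ∈ X ∆ Y, v ≠ u ∧ X ∆ ({u, v} : Finset V) ∈ E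

/-- A is inv-symmetric over GF(4): inv(−Aᵀ) = A entrywise, inv = (·²) -/
def InvSymm (A : Matrix V V (GaloisField 2 2)) : Prop :=
  ∀ i j, (-(Aᵀ i j)) ^ 2 = A i j
/-- the columns of A indexed by Y are linearly independent -/
def ColIndep {W F : Type} [Field F] [Fintype W] (A : Matrix W V F) (Y : Finset V) : Prop :=
  LinearIndependent F (fun y : Y => (Aᵀ y.1 : W → F))

open scoped Classical in
/-- the bases (maximal column-independent sets) of the column matroid of A -/
noncomputable def colBases {W F : Type} [Field F] [Fintype W] (A : Matrix W V F) :
    Finset (Finset V) :=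
  Finset.univ.filter (fun Y => ColIndep A Y ∧ ∀ Z, Y ⊆ Z → ColIndep A Z → Y = Z)
/-- the set system of inclusion-maximal members of E -/
def maxSS (E : Finset (Finset V)) : Finset (Finset V) :=
  E.filter (fun Y => ∀ Z ∈ E, Y ⊆ Z → Y = Z)

/-- the kernel L = ker(A) of A, as a set of vectors -/
def kerSet {W F : Type} [Field F] [Fintype W] (A : Matrix W V F) : Set (V → F) :=
  {v | A.mulVec v = 0}

/-- the orthogonal complement of a set of vectors w.r.t. the standard form -/
def orthSet {F : Type} [Field F] (L : Set (V → F)) : Set (V → F) :=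
  {w | ∀ v ∈ L, ∑ i, v i * w i = 0}

/-- the bicycle space BC_L = L ∩ inv(L^⊥) of L = ker(A) over GF(4), where
inv = (·²) entrywise (an involution, so v ∈ inv(L^⊥) iff inv(v) ∈ L^⊥) -/
def bicycle {W : Type} [Fintype W] (A : Matrix W V (GaloisField 2 2)) :
    Set (V → GaloisField 2 2) :=
  {v | v ∈ kerSet A ∧ (fun i => (v i) ^ 2) ∈ orthSet (kerSet A)}

/-- X is independent in the matroid M(L) of a set of vectors L: X contains the
support of no nonzero vector of L (i.e. contains no circuit of M(L)) -/
def SpaceIndep {F : Type} [Field F] (L : Set (V → F)) (X : Finset V) : Prop :=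
  ∀ v ∈ L, (∀ i, v i ≠ 0 → i ∈ X) → v = 0

open scoped Classical in
/-- the bases of the matroid M(L) of a set of vectors L -/
noncomputable def spaceBases {F : Type} [Field F] (L : Set (V → F)) :
    Finset (Finset V) :=
  Finset.univ.filter (fun X => SpaceIndep L X ∧ ∀ Z, X ⊆ Z → SpaceIndep L Z → X = Z)



section Aux
open scoped Classical
set_option linter.unusedSectionVars false

noncomputable instance : Fintype (GaloisField 2 2) := Fintype.ofFinite _
abbrev F4 := GaloisField 2 2




lemma F4.card : Fintype.card F4 = 4 := by
  have := GaloisField.card 2 2 (by norm_num)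
  rw [Nat.card_eq_fintype_card] at this
  exact this.trans (by norm_num)

lemma F4.pow4 (x : F4) : x ^ 4 = x := by
  have h := FiniteField.pow_card x
  rwa [F4.card] at h

lemma F4.two (x : F4) : x + x = 0 := by
  have : (2 : F4) = 0 := by exact_mod_cast CharP.cast_eq_zero F4 2
  calc x + x = 2 * x := by ring
  _ = 0 := by rw [this, zero_mul]

lemma F4.cube (x : F4) (hx : x ≠ 0) : x * x ^ 2 = 1 := by
  have h4 : x ^ 4 = x := F4.pow4 x
  have : x * (x * x ^ 2 - 1) = 0 := by linear_combination h4
  rcases mul_eq_zero.mp this with h | h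
  · exact absurd h hx
  · linear_combination h

lemma F4.sq_add (x y : F4) : (x + y) ^ 2 = x ^ 2 + y ^ 2 := by
  have : (2 : F4) = 0 := by exact_mod_cast CharP.cast_eq_zero F4 2
  ring_nf
  rw [show x * y * 2 = x*y*(2:F4) from rfl, this]
  ring

lemma F4.sq_sum {ι : Type*} (s : Finset ι) (f : ι → F4) :
    (∑ i ∈ s, f i) ^ 2 = ∑ i ∈ s, (f i) ^ 2 := by
  classical
  induction s using Finset.induction with
  | empty => simp
  | insert _ _ h ih => rw [Finset.sum_insert h, Finset.sum_insert h, F4.sq_add, ih]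

lemma F4.sq_eq_zero {x : F4} : x ^ 2 = 0 ↔ x = 0 := by
  constructor
  · intro h; exact pow_eq_zero_iff (by norm_num) |>.mp h
  · intro h; rw [h]; ring

lemma F4.sq_sq (x : F4) : (x ^ 2) ^ 2 = x := by
  rw [← pow_mul]; exact F4.pow4 x

lemma F4.cast_nat_ne_zero_iff (n : ℕ) : (n : F4) ≠ 0 ↔ Odd n := by
  rw [Ne, CharP.cast_eq_zero_iff F4 2 n, ← even_iff_two_dvd, Nat.not_even_iff_odd]

omit [Fintype V] in
lemma card_symmDiff_parity (s t : Finset (Finset V)) :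
    (s ∆ t).card + 2 * (s ∩ t).card = s.card + t.card := by
  rw [symmDiff_def, Finset.sup_eq_union,
    Finset.card_union_of_disjoint disjoint_sdiff_sdiff]
  have h1 : (s \ t).card + (s ∩ t).card = s.card := Finset.card_sdiff_add_card_inter s t
  have h2 : (t \ s).card + (t ∩ s).card = t.card := Finset.card_sdiff_add_card_inter t s
  rw [Finset.inter_comm t s] at h2
  omega

omit [Fintype V] in
lemma filter_symmDiff' (s t : Finset (Finset V)) (p : Finset V → Prop) [DecidablePred p] :
    (s ∆ t).filter p = (s.filter p) ∆ (t.filter p) := by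
  ext B
  simp only [Finset.mem_filter, Finset.mem_symmDiff]
  tauto

omit [Fintype V] in
/-- parity of members of `loopC E u` between `X \ T` and `X`, with `u ∉ T`. -/
lemma loopC_count (E : Finset (Finset V)) (u : V) (T X : Finset V) (hu : u ∉ T) :
    Odd (((loopC E u).filter (fun B => X \ T ⊆ B ∧ B ⊆ X)).card) ↔
    Odd ((E.filter (fun B => X \ insert u T ⊆ B ∧ B ⊆ X)).card) := by
  have hsd : X \ insert u T = (X \ T).erase u := by
    ext x; simp only [Finset.mem_sdiff, Finset.mem_erase, Finset.mem_insert]; tauto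
  have hDeq : ((E.filter (fun Y => u ∉ Y)).image (fun Y => insert u Y)).filter
        (fun B => X \ T ⊆ B ∧ B ⊆ X)
      = (E.filter (fun Y => u ∉ Y ∧ (X \ T ⊆ insert u Y ∧ insert u Y ⊆ X))).image
        (fun Y => insert u Y) := by
    ext B
    simp only [Finset.mem_filter, Finset.mem_image]
    constructor
    · rintro ⟨⟨Y, hY, rfl⟩, hΦB⟩
      exact ⟨Y, ⟨hY.1, hY.2, hΦB.1, hΦB.2⟩, rfl⟩
    · rintro ⟨Y, hY, rfl⟩
      exact ⟨⟨Y, ⟨hY.1, hY.2.1⟩, rfl⟩, hY.2.2.1, hY.2.2.2⟩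
  have hDcard : (((E.filter (fun Y => u ∉ Y)).image (fun Y => insert u Y)).filter
        (fun B => X \ T ⊆ B ∧ B ⊆ X)).card
      = (E.filter (fun Y => u ∉ Y ∧ (X \ T ⊆ insert u Y ∧ insert u Y ⊆ X))).card := by
    rw [hDeq, Finset.card_image_of_injOn]
    intro Y hY Z hZ h
    simp only [Finset.coe_filter, Set.mem_setOf_eq] at hY hZ
    have : (insert u Y).erase u = (insert u Z).erase u := by simp only at h; rw [h]
    rwa [Finset.erase_insert hY.2.1, Finset.erase_insert hZ.2.1] at this
  have hsymm := card_symmDiff_parity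
    (E.filter (fun B => X \ T ⊆ B ∧ B ⊆ X))
    (((E.filter (fun Y => u ∉ Y)).image (fun Y => insert u Y)).filter
      (fun B => X \ T ⊆ B ∧ B ⊆ X))
  rw [← filter_symmDiff'] at hsymm
  rw [show (E ∆ ((E.filter (fun Y => u ∉ Y)).image fun Y => insert u Y)) = loopC E u from rfl]
    at hsymm
  by_cases huX : u ∈ X
  · have hA1 : E.filter (fun Y => u ∉ Y ∧ (X \ T ⊆ insert u Y ∧ insert u Y ⊆ X))
        = E.filter (fun Y => u ∉ Y ∧ (X \ insert u T ⊆ Y ∧ Y ⊆ X)) := by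
      apply Finset.filter_congr
      intro Y _
      constructor
      · rintro ⟨huY, h1, h2⟩
        refine ⟨huY, fun x hx => ?_, fun x hx => h2 (Finset.mem_insert_of_mem hx)⟩
        rw [hsd] at hx
        have := h1 (Finset.mem_of_mem_erase hx)
        rcases Finset.mem_insert.mp this with rfl | h
        · exact absurd rfl (Finset.mem_erase.mp hx).1
        · exact h
      · rintro ⟨huY, h1, h2⟩
        refine ⟨huY, fun x hx => ?_, fun x hx => ?_⟩
        · by_cases hxu : x = u
          · exact Finset.mem_insert.mpr (Or.inl hxu)
          · refine Finset.mem_insert_of_mem (h1 ?_)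
            rw [hsd]; exact Finset.mem_erase.mpr ⟨hxu, hx⟩
        · rcases Finset.mem_insert.mp hx with rfl | h
          · exact huX
          · exact h2 h
    have hA2 : E.filter (fun B => X \ T ⊆ B ∧ B ⊆ X)
        = E.filter (fun Y => u ∈ Y ∧ (X \ insert u T ⊆ Y ∧ Y ⊆ X)) := by
      apply Finset.filter_congr
      intro Y _
      constructor
      · rintro ⟨h1, h2⟩
        refine ⟨h1 (Finset.mem_sdiff.mpr ⟨huX, hu⟩), fun x hx => ?_, h2⟩
        rw [hsd] at hx
        exact h1 (Finset.mem_of_mem_erase hx)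
      · rintro ⟨huY, h1, h2⟩
        refine ⟨fun x hx => ?_, h2⟩
        by_cases hxu : x = u
        · rwa [hxu]
        · refine h1 ?_
          rw [hsd]
          exact Finset.mem_erase.mpr ⟨hxu, hx⟩
    have hsplit : (E.filter (fun Y => u ∈ Y ∧ (X \ insert u T ⊆ Y ∧ Y ⊆ X))).card
        + (E.filter (fun Y => u ∉ Y ∧ (X \ insert u T ⊆ Y ∧ Y ⊆ X))).card
        = (E.filter (fun B => X \ insert u T ⊆ B ∧ B ⊆ X)).card := by
      rw [← Finset.card_union_of_disjoint]
      · congr 1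
        ext Y
        simp only [Finset.mem_union, Finset.mem_filter]
        tauto
      · rw [Finset.disjoint_left]
        intro Y h1 h2
        exact (Finset.mem_filter.mp h2).2.1 (Finset.mem_filter.mp h1).2.1
    rw [Nat.odd_iff, Nat.odd_iff]
    rw [hA1] at hDcard
    rw [hA2] at hsymm
    omega
  · have hD0 : (E.filter (fun Y => u ∉ Y ∧ (X \ T ⊆ insert u Y ∧ insert u Y ⊆ X))).card = 0 := by
      rw [Finset.card_eq_zero]
      apply Finset.filter_eq_empty_iff.mpr
      rintro Y _ ⟨_, _, h2⟩
      exact huX (h2 (Finset.mem_insert_self u Y))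
    have hPsiPhi : E.filter (fun B => X \ insert u T ⊆ B ∧ B ⊆ X)
        = E.filter (fun B => X \ T ⊆ B ∧ B ⊆ X) := by
      apply Finset.filter_congr
      intro Y _
      rw [hsd, Finset.erase_eq_of_notMem (fun h => huX (Finset.mem_sdiff.mp h).1)]
    rw [hPsiPhi, Nat.odd_iff, Nat.odd_iff]
    omega

omit [Fintype V] in
lemma foldl_loopC (E : Finset (Finset V)) (l : List V) (hl : l.Nodup) (X : Finset V) :
    X ∈ l.foldl loopC E ↔ Odd ((E.filter (fun B => X \ l.toFinset ⊆ B ∧ B ⊆ X)).card) := by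
  induction l generalizing E with
  | nil =>
    simp only [List.foldl_nil, List.toFinset_nil, Finset.sdiff_empty]
    have : E.filter (fun B => X ⊆ B ∧ B ⊆ X) = E.filter (fun B => B = X) := by
      apply Finset.filter_congr; intro Y _
      constructor
      · rintro ⟨h1, h2⟩; exact Finset.Subset.antisymm h2 h1
      · rintro rfl; exact ⟨Finset.Subset.refl _, Finset.Subset.refl _⟩
    rw [this, Finset.filter_eq']
    by_cases h : X ∈ E <;> simp [h]
  | cons u t ih =>
    simp only [List.foldl_cons, List.toFinset_cons]
    rw [ih (loopC E u) (List.nodup_cons.mp hl).2]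
    have : X \ insert u t.toFinset = X \ insert u t.toFinset := rfl
    rw [← loopC_count E u t.toFinset X
      (fun h => (List.nodup_cons.mp hl).1 (List.mem_toFinset.mp h))]



set_option linter.unusedSectionVars false

/-- dot product as a linear map in the first argument -/
noncomputable def dotL (w : V → F4) : (V → F4) →ₗ[F4] F4 where
  toFun v := ∑ i, v i * w i
  map_add' v v' := by simp [add_mul, Finset.sum_add_distrib]
  map_smul' c v := by simp [Finset.mul_sum, mul_assoc]

/-- orthogonal complement of a submodule w.r.t. the standard bilinear form -/
noncomputable def orthSub (L : Submodule F4 (V → F4)) : Submodule F4 (V → F4) where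
  carrier := {w | ∀ v ∈ L, ∑ i, v i * w i = 0}
  add_mem' := by
    intro a b ha hb v hv
    simp only [Set.mem_setOf_eq] at ha hb ⊢
    rw [show ∑ i, v i * (a + b) i = (∑ i, v i * a i) + ∑ i, v i * b i by
      rw [← Finset.sum_add_distrib]; congr 1; ext i; simp [mul_add]]
    rw [ha v hv, hb v hv, add_zero]
  zero_mem' := by intro v hv; simp
  smul_mem' := by
    intro c a ha v hv
    simp only [Set.mem_setOf_eq] at ha ⊢
    rw [show ∑ i, v i * (c • a) i = c * ∑ i, v i * a i by
      rw [Finset.mul_sum]; congr 1; ext i; simp [Pi.smul_apply]; ring]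
    rw [ha v hv, mul_zero]

lemma mem_orthSub {L : Submodule F4 (V → F4)} {w : V → F4} :
    w ∈ orthSub L ↔ ∀ v ∈ L, ∑ i, v i * w i = 0 := Iff.rfl

/-- matrix whose rows are a basis of L -/
noncomputable def rowsOf (L : Submodule F4 (V → F4)) :
    Matrix (Fin (Module.finrank F4 L)) V F4 :=
  Matrix.of fun i j => ((Module.finBasis F4 L) i : V → F4) j

lemma rowsOf_mem (L : Submodule F4 (V → F4)) (i : Fin (Module.finrank F4 L)) :
    (rowsOf L i : V → F4) ∈ L := ((Module.finBasis F4 L) i).2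

lemma span_rowsOf (L : Submodule F4 (V → F4)) :
    Submodule.span F4 (Set.range (rowsOf L)) = L := by
  have := Module.Basis.span_eq (Module.finBasis F4 L)
  have h2 : Submodule.span F4 (Set.range fun i => ((Module.finBasis F4 L) i : V → F4))
      = Submodule.map L.subtype (Submodule.span F4 (Set.range (Module.finBasis F4 L))) := by
    rw [Submodule.map_span]
    congr 1
    ext x
    simp [Set.range_comp]
  rw [show (Set.range (rowsOf L)) = (Set.range fun i => ((Module.finBasis F4 L) i : V → F4))
    from rfl, h2, this, Submodule.map_top, Submodule.range_subtype]

lemma ker_rowsOf (L : Submodule F4 (V → F4)) :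
    LinearMap.ker (rowsOf L).mulVecLin = orthSub L := by
  ext w
  rw [LinearMap.mem_ker, mem_orthSub]
  constructor
  · intro h v hv
    have hv' : v ∈ Submodule.span F4 (Set.range (rowsOf L)) := by rw [span_rowsOf]; exact hv
    clear hv
    have key : dotL w v = 0 := by
      induction hv' using Submodule.span_induction with
      | mem x hx =>
        obtain ⟨i, rfl⟩ := hx
        have := congrFun h i
        simpa [dotL, Matrix.mulVecLin, Matrix.mulVec, dotProduct, mul_comm] using this
      | zero => simp
      | add x y _ _ hx hy => rw [map_add, hx, hy, add_zero]
      | smul c x _ hx => rw [_root_.map_smul, hx, smul_zero]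
    simpa [dotL] using key
  · intro h
    funext i
    have := h (rowsOf L i) (rowsOf_mem L i)
    simpa [Matrix.mulVecLin, Matrix.mulVec, dotProduct, mul_comm] using this

lemma rank_rowsOf (L : Submodule F4 (V → F4)) :
    (rowsOf L).rank = Module.finrank F4 L := by
  rw [← Matrix.rank_transpose, Matrix.rank_eq_finrank_span_cols]
  have : Submodule.span F4 (Set.range (rowsOf L)ᵀᵀ) = L := by
    rw [Matrix.transpose_transpose]
    exact span_rowsOf L
  rw [show (rowsOf L)ᵀᵀ = rowsOf L from Matrix.transpose_transpose _] at this
  change Module.finrank F4 ↥(Submodule.span F4 (Set.range (rowsOf L))) = _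
  rw [this]

lemma finrank_orthSub (L : Submodule F4 (V → F4)) :
    Module.finrank F4 (orthSub L) + Module.finrank F4 L = Fintype.card V := by
  have h := LinearMap.finrank_range_add_finrank_ker (rowsOf L).mulVecLin
  rw [ker_rowsOf] at h
  have hr : (rowsOf L).rank = Module.finrank F4 L := rank_rowsOf L
  rw [Matrix.rank] at hr
  rw [hr] at h
  have : Module.finrank F4 (V → F4) = Fintype.card V := by
    simp [Module.finrank_pi]
  omega

lemma le_orthSub_orthSub (L : Submodule F4 (V → F4)) : L ≤ orthSub (orthSub L) := by
  intro v hv w hw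
  rw [show ∑ i, w i * v i = ∑ i, v i * w i by congr 1; ext i; ring]
  exact hw v hv

lemma orthSub_orthSub (L : Submodule F4 (V → F4)) : orthSub (orthSub L) = L := by
  have h1 := finrank_orthSub L
  have h2 := finrank_orthSub (orthSub L)
  exact (Submodule.eq_of_le_of_finrank_le (le_orthSub_orthSub L) (by omega)).symm



set_option linter.unusedSectionVars false

lemma spaceIndep_anti {F : Type} [Field F] {L : Set (V → F)} {X X' : Finset V}
    (h : X ⊆ X') (h' : SpaceIndep L X') : SpaceIndep L X :=
  fun v hv hs => h' v hv (fun i hi => h (hs i hi))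

/-- projection of L to coordinates outside X -/
noncomputable def projL (L : Submodule F4 (V → F4)) (X : Finset V) :
    L →ₗ[F4] ((Finset.univ \ X : Finset V) → F4) where
  toFun v := fun i => (v : V → F4) i
  map_add' v w := by ext i; simp
  map_smul' c v := by ext i; simp

lemma projL_inj {L : Submodule F4 (V → F4)} {X : Finset V}
    (h : SpaceIndep (↑L : Set (V → F4)) X) :
    Function.Injective (projL L X) := by
  rw [← LinearMap.ker_eq_bot]
  ext v
  simp only [LinearMap.mem_ker, Submodule.mem_bot]
  constructor
  · intro hv
    have hsupp : ∀ i, (v : V → F4) i ≠ 0 → i ∈ X := by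
      intro i hi
      by_contra hiX
      have : (⟨i, Finset.mem_sdiff.mpr ⟨Finset.mem_univ i, hiX⟩⟩ : (Finset.univ \ X : Finset V))
          ∈ Finset.univ := Finset.mem_univ _
      have := congrFun hv ⟨i, Finset.mem_sdiff.mpr ⟨Finset.mem_univ i, hiX⟩⟩
      exact hi this
    have := h v v.2 hsupp
    exact Subtype.ext this
  · rintro rfl; rfl

lemma card_le_of_spaceIndep {L : Submodule F4 (V → F4)} {X : Finset V}
    (h : SpaceIndep (↑L : Set (V → F4)) X) :
    X.card + Module.finrank F4 L ≤ Fintype.card V := by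
  have hinj := projL_inj h
  have hle := LinearMap.finrank_le_finrank_of_injective hinj
  have hcod : Module.finrank F4 (((Finset.univ \ X : Finset V) : Type) → F4)
      = (Finset.univ \ X).card := by
    rw [Module.finrank_pi, Fintype.card_coe]
  rw [hcod] at hle
  simp only [Finset.card_sdiff_of_subset (Finset.subset_univ X), Finset.card_univ] at hle
  have := Finset.card_le_univ X
  omega

lemma le_card_of_max {L : Submodule F4 (V → F4)} {X : Finset V}
    (h : SpaceIndep (↑L : Set (V → F4)) X)
    (hmax : ∀ i ∉ X, ¬ SpaceIndep (↑L : Set (V → F4)) (insert i X)) :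
    Fintype.card V ≤ X.card + Module.finrank F4 L := by
  -- choose witnesses
  have hv : ∀ i : (Finset.univ \ X : Finset V), ∃ v : V → F4,
      v ∈ L ∧ (∀ j, v j ≠ 0 → j ∈ insert (i : V) X) ∧ v ≠ 0 := by
    rintro ⟨i, hi⟩
    have hiX : i ∉ X := (Finset.mem_sdiff.mp hi).2
    have := hmax i hiX
    rw [SpaceIndep] at this
    push_neg at this
    obtain ⟨v, hv1, hv2, hv3⟩ := this
    exact ⟨v, hv1, hv2, hv3⟩
  choose v hvL hvsupp hvne using hv
  have hdiag : ∀ i : (Finset.univ \ X : Finset V), v i (i : V) ≠ 0 := by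
    intro i hzero
    apply hvne i
    apply h (v i) (hvL i)
    intro j hj
    rcases Finset.mem_insert.mp (hvsupp i j hj) with rfl | hX
    · exact absurd hzero hj
    · exact hX
  have hoff : ∀ i j : (Finset.univ \ X : Finset V), i ≠ j → v i (j : V) = 0 := by
    intro i j hij
    by_contra hne
    rcases Finset.mem_insert.mp (hvsupp i _ hne) with heq | hX
    · exact hij (Subtype.ext heq.symm)
    · exact (Finset.mem_sdiff.mp j.2).2 hX
  have hLI : LinearIndependent F4 (fun i : (Finset.univ \ X : Finset V) =>
      (⟨v i, hvL i⟩ : L)) := by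
    rw [Fintype.linearIndependent_iff]
    intro c hc j
    have hc' := congrArg (Subtype.val) hc
    rw [Submodule.coe_sum] at hc'
    have hc'' := congrFun hc' (j : V)
    simp only [Finset.sum_apply, Pi.zero_apply, Submodule.coe_zero] at hc''
    rw [Finset.sum_eq_single j] at hc''
    · simp only [SetLike.val_smul, Pi.smul_apply, smul_eq_mul] at hc''
      exact (mul_eq_zero.mp hc'').resolve_right (hdiag j)
    · intro i _ hij
      simp only [SetLike.val_smul, Pi.smul_apply, smul_eq_mul]
      rw [hoff i j hij, mul_zero]
    · intro hj; exact absurd (Finset.mem_univ j) hj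
  have := hLI.fintype_card_le_finrank
  simp only [Fintype.card_coe, Finset.card_sdiff_of_subset (Finset.subset_univ X), Finset.card_univ]
    at this
  have hXle := Finset.card_le_univ X
  omega

lemma mem_spaceBases_iff {L : Submodule F4 (V → F4)} {X : Finset V} :
    X ∈ spaceBases (↑L : Set (V → F4)) ↔
      SpaceIndep (↑L : Set (V → F4)) X ∧
      X.card + Module.finrank F4 L = Fintype.card V := by
  rw [spaceBases, Finset.mem_filter]
  constructor
  · rintro ⟨-, hind, hmax⟩
    refine ⟨hind, le_antisymm (card_le_of_spaceIndep hind) (le_card_of_max hind ?_)⟩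
    intro i hiX hins
    exact hiX (hmax (insert i X) (Finset.subset_insert i X) hins ▸ Finset.mem_insert_self i X)
  · rintro ⟨hind, hcard⟩
    refine ⟨Finset.mem_univ X, hind, fun Z hXZ hZ => ?_⟩
    have := card_le_of_spaceIndep hZ
    exact Finset.eq_of_subset_of_card_le hXZ (by omega)

lemma exists_spaceBasis_superset {L : Submodule F4 (V → F4)} {X : Finset V}
    (h : SpaceIndep (↑L : Set (V → F4)) X) :
    ∃ Y, X ⊆ Y ∧ Y ∈ spaceBases (↑L : Set (V → F4)) := by
  suffices H : ∀ (m : ℕ) (X : Finset V), Fintype.card V - X.card ≤ m →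
      SpaceIndep (↑L : Set (V → F4)) X → ∃ Y, X ⊆ Y ∧ Y ∈ spaceBases (↑L : Set (V → F4)) by
    exact H (Fintype.card V) X (by omega) h
  intro m
  induction m with
  | zero =>
    intro X hm hind
    have hX : X = Finset.univ := by
      apply Finset.eq_univ_of_card
      have := Finset.card_le_univ X
      omega
    refine ⟨X, Finset.Subset.refl _, mem_spaceBases_iff.mpr ⟨hind, ?_⟩⟩
    refine le_antisymm (card_le_of_spaceIndep hind) (le_card_of_max hind ?_)
    intro i hi
    rw [hX] at hi
    exact absurd (Finset.mem_univ i) hi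
  | succ m ih =>
    intro X hm hind
    by_cases hstep : ∃ i ∉ X, SpaceIndep (↑L : Set (V → F4)) (insert i X)
    · obtain ⟨i, hiX, hins⟩ := hstep
      obtain ⟨Y, hY1, hY2⟩ := ih (insert i X) (by rw [Finset.card_insert_of_notMem hiX]; omega) hins
      exact ⟨Y, (Finset.subset_insert i X).trans hY1, hY2⟩
    · push_neg at hstep
      refine ⟨X, Finset.Subset.refl _,
        mem_spaceBases_iff.mpr ⟨hind,
          le_antisymm (card_le_of_spaceIndep hind) (le_card_of_max hind hstep)⟩⟩

lemma spaceBasis_surj {L : Submodule F4 (V → F4)} {X : Finset V}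
    (h : X ∈ spaceBases (↑L : Set (V → F4))) (z : V → F4) :
    ∃ ρ ∈ L, ∀ i ∉ X, ρ i = z i := by
  obtain ⟨hind, hcard⟩ := mem_spaceBases_iff.mp h
  have hinj := projL_inj hind
  have hrange : LinearMap.range (projL L X) = ⊤ := by
    apply Submodule.eq_top_of_finrank_eq
    rw [LinearMap.finrank_range_of_inj hinj]
    rw [Module.finrank_pi, Fintype.card_coe]
    simp only [Finset.card_sdiff_of_subset (Finset.subset_univ X), Finset.card_univ]
    omega
  have : (fun i : (Finset.univ \ X : Finset V) => z i) ∈ LinearMap.range (projL L X) := by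
    rw [hrange]; trivial
  obtain ⟨ρ, hρ⟩ := this
  refine ⟨(ρ : V → F4), ρ.2, fun i hi => ?_⟩
  have := congrFun hρ ⟨i, Finset.mem_sdiff.mpr ⟨Finset.mem_univ i, hi⟩⟩
  exact this


set_option linter.unusedSectionVars false

lemma sign_smul_char2 (s : ℤˣ) (x : F4) : s • x = x := by
  rcases Int.units_eq_one_or s with h | h <;> rw [h]
  · simp
  · have : (-1 : ℤˣ) • x = -x := by simp
    rw [this, CharTwo.neg_eq]

lemma det_char2 {m : ℕ} (M : Matrix (Fin m) (Fin m) F4) :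
    M.det = ∑ σ : Equiv.Perm (Fin m), ∏ i, M (σ i) i := by
  rw [Matrix.det_apply]
  congr 1
  ext σ
  exact sign_smul_char2 _ _

lemma det_permute_col_char2 {m : ℕ} (σ : Equiv.Perm (Fin m)) (M : Matrix (Fin m) (Fin m) F4) :
    (M.submatrix id σ).det = M.det := by
  rw [Matrix.det_permute' σ M]
  rcases Int.units_eq_one_or σ.sign with h | h <;> rw [h] <;>
    simp [CharTwo.neg_eq]


noncomputable def selFun {r : ℕ} (Y : Finset V) (h : Y.card = r) : Fin r → V :=
  fun j => (Y.equivFin.symm (Fin.cast h.symm j) : V)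

lemma selFun_inj {r : ℕ} (Y : Finset V) (h : Y.card = r) : Function.Injective (selFun Y h) := by
  intro a b hab
  have := Subtype.ext hab
  have h2 := Y.equivFin.symm.injective (this)
  exact Fin.cast_injective _ h2

lemma selFun_mem {r : ℕ} (Y : Finset V) (h : Y.card = r) (j : Fin r) : selFun Y h j ∈ Y :=
  (Y.equivFin.symm (Fin.cast h.symm j)).2

lemma selFun_image {r : ℕ} (Y : Finset V) (h : Y.card = r) :
    Finset.image (selFun Y h) Finset.univ = Y := by
  apply Finset.eq_of_subset_of_card_le
  · intro x hx
    obtain ⟨j, _, rfl⟩ := Finset.mem_image.mp hx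
    exact selFun_mem Y h j
  · rw [Finset.card_image_of_injective _ (selFun_inj Y h), Finset.card_univ, Fintype.card_fin, h]

lemma cauchy_binet {r : ℕ} (P : Matrix (Fin r) V F4) (Q : Matrix V (Fin r) F4) :
    (P * Q).det = ∑ Y ∈ Finset.powersetCard r (Finset.univ : Finset V),
      (if h : Y.card = r then
        (P.submatrix id (selFun Y h)).det * (Q.submatrix (selFun Y h) id).det else 0) := by
  have step1 : (P * Q).det = ∑ f : Fin r → V, (P.submatrix id f).det * ∏ i, Q (f i) i := by
    rw [det_char2]
    have expand : ∀ σ : Equiv.Perm (Fin r), (∏ i, (P * Q) (σ i) i)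
        = ∑ f ∈ Fintype.piFinset (fun _ : Fin r => (Finset.univ : Finset V)),
            ∏ i, P (σ i) (f i) * Q (f i) i := by
      intro σ
      simp_rw [Matrix.mul_apply]
      rw [Finset.prod_univ_sum]
    calc ∑ σ : Equiv.Perm (Fin r), ∏ i, (P * Q) (σ i) i
        = ∑ σ : Equiv.Perm (Fin r), ∑ f ∈ Fintype.piFinset (fun _ : Fin r => (Finset.univ : Finset V)),
            ∏ i, P (σ i) (f i) * Q (f i) i := by
          exact Finset.sum_congr rfl (fun σ _ => expand σ)
      _ = ∑ f ∈ Fintype.piFinset (fun _ : Fin r => (Finset.univ : Finset V)),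
            ∑ σ : Equiv.Perm (Fin r), ∏ i, P (σ i) (f i) * Q (f i) i := Finset.sum_comm
      _ = ∑ f : Fin r → V, (P.submatrix id f).det * ∏ i, Q (f i) i := by
          rw [Fintype.piFinset_univ]
          apply Finset.sum_congr rfl
          intro f _
          rw [det_char2]
          rw [Finset.sum_mul]
          apply Finset.sum_congr rfl
          intro σ _
          rw [Finset.prod_mul_distrib]
          rfl
  rw [step1]
  -- restrict to injective f
  have step2 : ∑ f : Fin r → V, (P.submatrix id f).det * ∏ i, Q (f i) i
      = ∑ f ∈ Finset.univ.filter (fun f : Fin r → V => Function.Injective f),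
          (P.submatrix id f).det * ∏ i, Q (f i) i := by
    symm
    apply Finset.sum_subset (Finset.filter_subset _ _)
    intro f _ hf
    rw [Finset.mem_filter] at hf
    push_neg at hf
    have hninj : ¬ Function.Injective f := fun h => hf (Finset.mem_univ f) h
    rw [Function.not_injective_iff] at hninj
    obtain ⟨a, b, hab, hne⟩ := hninj
    have : (P.submatrix id f).det = 0 := by
      rw [← Matrix.det_transpose]
      apply Matrix.det_zero_of_row_eq hne
      funext k
      simp [Matrix.transpose_apply, Matrix.submatrix_apply, hab]
    rw [this, zero_mul]
  rw [step2]
  -- group by image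
  rw [← Finset.sum_fiberwise_of_maps_to (g := fun f : Fin r → V => Finset.image f Finset.univ)
    (t := Finset.powersetCard r (Finset.univ : Finset V)) ?hmaps]
  case hmaps =>
    intro f hf
    rw [Finset.mem_filter] at hf
    rw [Finset.mem_powersetCard]
    exact ⟨Finset.subset_univ _,
      by rw [Finset.card_image_of_injective _ hf.2, Finset.card_univ, Fintype.card_fin]⟩
  apply Finset.sum_congr rfl
  intro Y hY
  have hYc : Y.card = r := (Finset.mem_powersetCard.mp hY).2
  rw [dif_pos hYc]
  -- bijection between the fiber and permutations
  have key : ∑ f ∈ (Finset.univ.filter (fun f : Fin r → V => Function.Injective f)).filter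
        (fun f => Finset.image f Finset.univ = Y),
        (P.submatrix id f).det * ∏ i, Q (f i) i
      = ∑ σ : Equiv.Perm (Fin r),
        (P.submatrix id (selFun Y hYc)).det * ∏ i, Q (selFun Y hYc (σ i)) i := by
    symm
    apply Finset.sum_nbij (i := fun σ : Equiv.Perm (Fin r) => selFun Y hYc ∘ σ)
    · -- maps to fiber
      intro σ _
      rw [Finset.mem_filter]
      refine ⟨Finset.mem_filter.mpr ⟨Finset.mem_univ _, (selFun_inj Y hYc).comp σ.injective⟩, ?_⟩
      apply Finset.eq_of_subset_of_card_le
      · intro x hx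
        obtain ⟨j, _, rfl⟩ := Finset.mem_image.mp hx
        exact selFun_mem Y hYc (σ j)
      · rw [Finset.card_image_of_injective _ ((selFun_inj Y hYc).comp σ.injective),
          Finset.card_univ, Fintype.card_fin, hYc]
    · -- injective on perms
      intro σ hσ σ' hσ' h
      ext k
      have := congrFun h k
      exact congrArg Fin.val (selFun_inj Y hYc this)
    · -- surjective onto fiber
      intro f hf
      simp only [Finset.coe_filter, Set.mem_setOf_eq, Finset.mem_filter] at hf
      obtain ⟨⟨_, hinj⟩, himg⟩ := hf
      have hmem : ∀ i, f i ∈ Y := by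
        intro i
        rw [← himg]
        exact Finset.mem_image_of_mem f (Finset.mem_univ i)
      have hbij : Function.Bijective (fun i => Fin.cast hYc (Y.equivFin ⟨f i, hmem i⟩)) := by
        apply Finite.injective_iff_bijective.mp
        intro a b hab
        have hab' : Fin.cast hYc (Y.equivFin ⟨f a, hmem a⟩)
            = Fin.cast hYc (Y.equivFin ⟨f b, hmem b⟩) := hab
        have h1 := Fin.cast_injective hYc hab'
        have h2 := Y.equivFin.injective h1
        exact hinj (congrArg Subtype.val h2)
      refine ⟨Equiv.ofBijective _ hbij, by simp, ?_⟩
      funext k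
      simp only [Function.comp_apply, Equiv.ofBijective_apply, selFun]
      rw [Fin.cast_cast]
      simp
    · -- term equality
      intro σ _
      rw [show P.submatrix id (selFun Y hYc ∘ ⇑σ)
        = (P.submatrix id (selFun Y hYc)).submatrix id (⇑σ) from rfl]
      rw [det_permute_col_char2 σ]
      congr 1
  rw [key, ← Finset.mul_sum]
  congr 1
  rw [det_char2 (Q.submatrix (selFun Y hYc) id)]
  apply Finset.sum_congr rfl
  intro σ _
  rfl

section Core
open scoped Classical

variable {W : Type} [Fintype W]

/-- kernel of A as a submodule -/
noncomputable def kerK (A : Matrix W V F4) : Submodule F4 (V → F4) :=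
  LinearMap.ker A.mulVecLin

/-- the orthogonal complement of the kernel -/
noncomputable def WoS (A : Matrix W V F4) : Submodule F4 (V → F4) := orthSub (kerK A)

noncomputable def rrk (A : Matrix W V F4) : ℕ := Module.finrank F4 (WoS A)

/-- matrix whose rows form a basis of `WoS A` -/
noncomputable def A0 (A : Matrix W V F4) : Matrix (Fin (rrk A)) V F4 := rowsOf (WoS A)

lemma kerSet_eq (A : Matrix W V F4) : kerSet A = (↑(kerK A) : Set (V → F4)) := by
  ext v
  simp [kerSet, kerK, LinearMap.mem_ker, Matrix.mulVecLin]

lemma ker_A0 (A : Matrix W V F4) : LinearMap.ker (A0 A).mulVecLin = kerK A := by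
  show LinearMap.ker (rowsOf (WoS A)).mulVecLin = kerK A
  rw [ker_rowsOf, WoS, orthSub_orthSub]

lemma orthSet_eq (A : Matrix W V F4) : orthSet (kerSet A) = (↑(WoS A) : Set (V → F4)) := by
  rw [kerSet_eq]
  rfl

lemma rrk_add_finrank (A : Matrix W V F4) :
    rrk A + Module.finrank F4 (kerK A) = Fintype.card V := by
  rw [rrk, WoS]
  exact finrank_orthSub (kerK A)

lemma colIndep_iff {W' : Type} [Fintype W'] (B : Matrix W' V F4) (Y : Finset V) :
    ColIndep B Y ↔ ∀ v ∈ (↑(LinearMap.ker B.mulVecLin) : Set (V → F4)),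
      (∀ i, v i ≠ 0 → i ∈ Y) → v = 0 := by
  rw [ColIndep, Fintype.linearIndependent_iff]
  constructor
  · intro h v hv hsupp
    have hg : ∀ y : Y, v (y : V) = 0 := by
      apply h (fun y : Y => v (y : V))
      funext j
      have hmv : B.mulVec v = 0 := hv
      have hj := congrFun hmv j
      rw [Finset.sum_apply]
      simp only [Pi.smul_apply, smul_eq_mul, Matrix.transpose_apply, Pi.zero_apply]
      rw [Finset.sum_coe_sort Y (fun i => v i * B j i)]
      have hj' : ∑ i : V, B j i * v i = 0 := by
        simpa [Matrix.mulVec, dotProduct] using hj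
      calc ∑ i ∈ Y, v i * B j i
          = ∑ i : V, v i * B j i := by
            apply Finset.sum_subset (Finset.subset_univ Y)
            intro x _ hxY
            have hvx : v x = 0 := by
              by_contra hne
              exact hxY (hsupp x hne)
            rw [hvx, zero_mul]
        _ = ∑ i : V, B j i * v i := by
            apply Finset.sum_congr rfl
            intro i _
            ring
        _ = 0 := hj' 
    funext i
    by_cases hi : v i = 0
    · exact hi
    · exact hg ⟨i, hsupp i hi⟩
  · intro h g hg y
    set v : V → F4 := fun i => if hi : i ∈ Y then g ⟨i, hi⟩ else 0 with hv
    have hvk : v ∈ LinearMap.ker B.mulVecLin := by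
      rw [LinearMap.mem_ker]
      funext j
      have hj := congrFun hg j
      rw [Finset.sum_apply] at hj
      simp only [Pi.smul_apply, smul_eq_mul, Matrix.transpose_apply, Pi.zero_apply] at hj
      show (B *ᵥ v) j = (0 : W' → F4) j
      rw [Matrix.mulVec, dotProduct, Pi.zero_apply]
      calc ∑ i : V, B j i * v i
          = ∑ i ∈ Y, B j i * v i := by
            symm
            apply Finset.sum_subset (Finset.subset_univ Y)
            intro x _ hxY
            have hvx : v x = 0 := by rw [hv]; simp [hxY]
            rw [hvx, mul_zero]
        _ = ∑ x : Y, B j (x : V) * v (x : V) := (Finset.sum_coe_sort Y _).symm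
        _ = ∑ x : Y, g x * B j (x : V) := by
            apply Finset.sum_congr rfl
            intro x _
            have : v (x : V) = g x := by rw [hv]; simp
            rw [this]; ring
        _ = 0 := hj
    have hvs : ∀ i, v i ≠ 0 → i ∈ Y := by
      intro i hi
      by_contra hiY
      apply hi
      rw [hv]
      simp [hiY]
    have := h v hvk hvs
    have hy := congrFun this (y : V)
    rw [hv] at hy
    simpa [y.2] using hy

lemma colBases_eq {W' : Type} [Fintype W'] (B : Matrix W' V F4) :
    colBases B = spaceBases (↑(LinearMap.ker B.mulVecLin) : Set (V → F4)) := by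
  rw [colBases, spaceBases]
  apply Finset.filter_congr
  intro Y _
  constructor
  · rintro ⟨h1, h2⟩
    exact ⟨(colIndep_iff B Y).mp h1, fun Z hYZ hZ =>
      h2 Z hYZ ((colIndep_iff B Z).mpr hZ)⟩
  · rintro ⟨h1, h2⟩
    exact ⟨(colIndep_iff B Y).mpr h1, fun Z hYZ hZ =>
      h2 Z hYZ ((colIndep_iff B Z).mp hZ)⟩

lemma prod_selFun {r : ℕ} (Y : Finset V) (h : Y.card = r) (g : V → F4) :
    ∏ t : Fin r, g (selFun Y h t) = ∏ j ∈ Y, g j := by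
  apply Finset.prod_nbij (i := selFun Y h)
  · intro t _; exact selFun_mem Y h t
  · intro a _ b _ hab; exact selFun_inj Y h hab
  · intro j hj
    simp only [Finset.mem_coe] at hj
    refine ⟨Fin.cast h (Y.equivFin ⟨j, hj⟩), by simp, ?_⟩
    simp only [selFun, Fin.cast_cast, Fin.cast_eq_self]
    rw [Equiv.symm_apply_apply]
  · intro t _; rfl

lemma sum_selFun {r : ℕ} (Y : Finset V) (h : Y.card = r) (g : V → F4) :
    ∑ t : Fin r, g (selFun Y h t) = ∑ j ∈ Y, g j := by
  apply Finset.sum_nbij (i := selFun Y h)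
  · intro t _; exact selFun_mem Y h t
  · intro a _ b _ hab; exact selFun_inj Y h hab
  · intro j hj
    simp only [Finset.mem_coe] at hj
    refine ⟨Fin.cast h (Y.equivFin ⟨j, hj⟩), by simp, ?_⟩
    simp only [selFun, Fin.cast_cast, Fin.cast_eq_self]
    rw [Equiv.symm_apply_apply]
  · intro t _; rfl

end Core

section Core2
open scoped Classical
variable {W : Type} [Fintype W]

lemma det_sel_ne_zero_iff (A : Matrix W V F4) (Y : Finset V) (h : Y.card = rrk A) :
    ((A0 A).submatrix id (selFun Y h)).det ≠ 0 ↔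
      SpaceIndep (↑(kerK A) : Set (V → F4)) Y := by
  rw [Ne, ← Matrix.exists_mulVec_eq_zero_iff, not_exists]
  constructor
  · -- no nonzero c in kernel of the submatrix → SpaceIndep
    intro hc v hvK hsupp
    by_contra hvne
    -- build c from v
    set c : Fin (rrk A) → F4 := fun t => v (selFun Y h t) with hcdef
    apply hc c
    constructor
    · -- c ≠ 0
      have : ∃ j, v j ≠ 0 := by
        by_contra hall
        push_neg at hall
        exact hvne (funext hall)
      obtain ⟨j, hj⟩ := this
      have hjY : j ∈ Y := hsupp j hj
      intro hc0
      have := congrFun hc0 (Fin.cast h (Y.equivFin ⟨j, hjY⟩))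
      rw [hcdef] at this
      simp only [selFun, Fin.cast_cast, Fin.cast_eq_self, Equiv.symm_apply_apply,
        Pi.zero_apply] at this
      exact hj this
    · -- submatrix *ᵥ c = 0
      funext i
      have hker : (A0 A).mulVec v = 0 := by
        have : v ∈ LinearMap.ker (A0 A).mulVecLin := by rw [ker_A0]; exact hvK
        exact this
      have hi := congrFun hker i
      rw [Matrix.mulVec, dotProduct] at hi ⊢
      simp only [Matrix.submatrix_apply, id_eq, Pi.zero_apply] at hi ⊢
      rw [hcdef]
      calc ∑ t : Fin (rrk A), (A0 A) i (selFun Y h t) * v (selFun Y h t)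
          = ∑ j ∈ Y, (A0 A) i j * v j := sum_selFun Y h (fun j => (A0 A) i j * v j)
        _ = ∑ j : V, (A0 A) i j * v j := by
            apply Finset.sum_subset (Finset.subset_univ Y)
            intro x _ hxY
            have hvx : v x = 0 := by
              by_contra hne
              exact hxY (hsupp x hne)
            rw [hvx, mul_zero]
        _ = 0 := hi
  · -- SpaceIndep → no nonzero kernel vector of the submatrix
    intro hind c
    rintro ⟨hcne, hc0⟩
    set v : V → F4 := fun j => if hj : j ∈ Y then c (Fin.cast h (Y.equivFin ⟨j, hj⟩)) else 0
      with hvdef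
    have hsel : ∀ t, v (selFun Y h t) = c t := by
      intro t
      rw [hvdef]
      simp only [selFun_mem Y h t, dif_pos]
      congr 1
      simp [selFun, Fin.cast_cast, Fin.cast_eq_self]
    have hvK : v ∈ (↑(kerK A) : Set (V → F4)) := by
      have : v ∈ LinearMap.ker (A0 A).mulVecLin := by
        rw [LinearMap.mem_ker]
        funext i
        have hi := congrFun hc0 i
        rw [Matrix.mulVec, dotProduct] at hi
        simp only [Matrix.submatrix_apply, id_eq, Pi.zero_apply] at hi
        show ((A0 A) *ᵥ v) i = (0 : Fin (rrk A) → F4) i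
        rw [Matrix.mulVec, dotProduct, Pi.zero_apply]
        calc ∑ j : V, (A0 A) i j * v j
            = ∑ j ∈ Y, (A0 A) i j * v j := by
              symm
              apply Finset.sum_subset (Finset.subset_univ Y)
              intro x _ hxY
              have : v x = 0 := by rw [hvdef]; simp [hxY]
              rw [this, mul_zero]
          _ = ∑ t : Fin (rrk A), (A0 A) i (selFun Y h t) * v (selFun Y h t) :=
              (sum_selFun Y h (fun j => (A0 A) i j * v j)).symm
          _ = ∑ t : Fin (rrk A), (A0 A) i (selFun Y h t) * c t := by
              apply Finset.sum_congr rfl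
              intro t _
              rw [hsel t]
          _ = 0 := hi
      rw [ker_A0] at this
      exact this
    have hvs : ∀ j, v j ≠ 0 → j ∈ Y := by
      intro j hj
      by_contra hjY
      apply hj
      rw [hvdef]
      simp [hjY]
    have := hind v hvK hvs
    apply hcne
    funext t
    rw [← hsel t, this]
    rfl

lemma mem_colBases_iff (A : Matrix W V F4) (Y : Finset V) :
    Y ∈ colBases A ↔ ∃ h : Y.card = rrk A, ((A0 A).submatrix id (selFun Y h)).det ≠ 0 := by
  rw [colBases_eq A]
  rw [show LinearMap.ker A.mulVecLin = kerK A from rfl]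
  rw [mem_spaceBases_iff]
  have hrk := rrk_add_finrank A
  constructor
  · rintro ⟨hind, hcard⟩
    have hY : Y.card = rrk A := by omega
    exact ⟨hY, (det_sel_ne_zero_iff A Y hY).mpr hind⟩
  · rintro ⟨hY, hdet⟩
    exact ⟨(det_sel_ne_zero_iff A Y hY).mp hdet, by omega⟩

end Core2

section Core3
open scoped Classical
variable {W : Type} [Fintype W]

noncomputable def Astar (A : Matrix W V F4) : Matrix V (Fin (rrk A)) F4 :=
  Matrix.of fun v j => ((A0 A) j v) ^ 2

noncomputable def GX (A : Matrix W V F4) (X : Finset V) :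
    Matrix (Fin (rrk A)) (Fin (rrk A)) F4 :=
  ((A0 A) * Matrix.diagonal (fun i => if i ∈ X then (1 : F4) else 0)) * Astar A

lemma prod_ind (Y X : Finset V) :
    (∏ j ∈ Y, (if j ∈ X then (1 : F4) else 0)) = if Y ⊆ X then 1 else 0 := by
  by_cases hYX : Y ⊆ X
  · rw [if_pos hYX]
    apply Finset.prod_eq_one
    intro j hj
    rw [if_pos (hYX hj)]
  · rw [if_neg hYX]
    obtain ⟨j, hjY, hjX⟩ := Finset.not_subset.mp hYX
    exact Finset.prod_eq_zero hjY (if_neg hjX)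

lemma detGX_eq_count (A : Matrix W V F4) (X : Finset V) :
    (GX A X).det = ((((colBases A).filter (fun Y => Y ⊆ X)).card : ℕ) : F4) := by
  rw [GX, cauchy_binet]
  have per : ∀ Y ∈ Finset.powersetCard (rrk A) (Finset.univ : Finset V),
      (if h : Y.card = rrk A then
        ((((A0 A) * Matrix.diagonal (fun i => if i ∈ X then (1 : F4) else 0)).submatrix
          id (selFun Y h)).det * ((Astar A).submatrix (selFun Y h) id).det) else 0)
      = if Y ∈ colBases A ∧ Y ⊆ X then (1 : F4) else 0 := by
    intro Y hYmem
    have hY : Y.card = rrk A := (Finset.mem_powersetCard.mp hYmem).2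
    rw [dif_pos hY]
    have hP : (((A0 A) * Matrix.diagonal (fun i => if i ∈ X then (1 : F4) else 0)).submatrix
        id (selFun Y hY)).det
        = ((A0 A).submatrix id (selFun Y hY)).det * (if Y ⊆ X then 1 else 0) := by
      have hmat : ((A0 A) * Matrix.diagonal (fun i => if i ∈ X then (1 : F4) else 0)).submatrix
          id (selFun Y hY)
          = ((A0 A).submatrix id (selFun Y hY)) *
            Matrix.diagonal (fun t => if selFun Y hY t ∈ X then (1 : F4) else 0) := by
        ext i t
        rw [Matrix.submatrix_apply, Matrix.mul_diagonal, Matrix.mul_diagonal,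
          Matrix.submatrix_apply]
      rw [hmat, Matrix.det_mul, Matrix.det_diagonal]
      congr 1
      rw [prod_selFun Y hY (fun j => if j ∈ X then (1 : F4) else 0)]
      exact prod_ind Y X
    have hQ : ((Astar A).submatrix (selFun Y hY) id).det
        = (((A0 A).submatrix id (selFun Y hY)).det) ^ 2 := by
      have hmat : (Astar A).submatrix (selFun Y hY) id
          = (((A0 A).submatrix id (selFun Y hY)).map (frobenius F4 2))ᵀ := by
        ext t i
        simp [Astar, Matrix.submatrix_apply, Matrix.map_apply, Matrix.transpose_apply,
          frobenius_def]
      rw [hmat, Matrix.det_transpose,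
        show ((A0 A).submatrix id (selFun Y hY)).map ⇑(frobenius F4 2)
          = (frobenius F4 2).mapMatrix ((A0 A).submatrix id (selFun Y hY)) from rfl,
        ← RingHom.map_det, frobenius_def]
    rw [hP, hQ]
    by_cases hYX : Y ⊆ X
    · rw [if_pos hYX, mul_one]
      by_cases hd : ((A0 A).submatrix id (selFun Y hY)).det = 0
      · rw [hd]
        rw [if_neg]
        · ring
        · rintro ⟨hYB, -⟩
          obtain ⟨h', hd'⟩ := (mem_colBases_iff A Y).mp hYB
          exact hd' (by convert hd)
      · rw [if_pos ⟨(mem_colBases_iff A Y).mpr ⟨hY, hd⟩, hYX⟩]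
        exact F4.cube _ hd
    · rw [if_neg hYX, mul_zero, zero_mul,
        if_neg (fun hc => hYX hc.2)]
  rw [Finset.sum_congr rfl per, Finset.sum_boole]
  congr 2
  ext Y
  simp only [Finset.mem_filter, Finset.mem_powersetCard]
  constructor
  · rintro ⟨-, hYB, hYX⟩
    exact ⟨hYB, hYX⟩
  · rintro ⟨hYB, hYX⟩
    obtain ⟨h', -⟩ := (mem_colBases_iff A Y).mp hYB
    exact ⟨⟨Finset.subset_univ Y, h'⟩, hYB, hYX⟩

lemma odd_count_iff_detGX (A : Matrix W V F4) (X : Finset V) :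
    Odd (((colBases A).filter (fun Y => Y ⊆ X)).card) ↔ (GX A X).det ≠ 0 := by
  rw [detGX_eq_count, F4.cast_nat_ne_zero_iff]

/-- the radical condition: `w` in the orthogonal space whose masked square lies in the kernel -/
def RadZero (A : Matrix W V F4) (X : Finset V) : Prop :=
  ∀ w ∈ (↑(WoS A) : Set (V → F4)),
    (fun i => if i ∈ X then (w i) ^ 2 else 0) ∈ (↑(kerK A) : Set (V → F4)) → w = 0

lemma rows_A0_linIndep (A : Matrix W V F4) :
    LinearIndependent F4 (fun j : Fin (rrk A) => ((A0 A) j : V → F4)) := by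
  have hb := (Module.finBasis F4 (WoS A)).linearIndependent
  exact hb.map' (WoS A).subtype (Submodule.ker_subtype _)

lemma GX_mulVec_eq (A : Matrix W V F4) (X : Finset V) (c : Fin (rrk A) → F4) :
    GX A X *ᵥ c
      = (A0 A) *ᵥ (fun l => if l ∈ X then (∑ j, (c j) ^ 2 * (A0 A) j l) ^ 2 else 0) := by
  rw [GX, ← Matrix.mulVec_mulVec, ← Matrix.mulVec_mulVec]
  have hAst : Astar A *ᵥ c = fun l => (∑ j, (c j) ^ 2 * (A0 A) j l) ^ 2 := by
    funext l
    rw [Matrix.mulVec, dotProduct]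
    rw [F4.sq_sum]
    apply Finset.sum_congr rfl
    intro j _
    rw [mul_pow, F4.sq_sq]
    simp [Astar]
    ring
  have hD : ((Matrix.diagonal fun i => if i ∈ X then (1 : F4) else 0) *ᵥ
      (fun l => (∑ j, (c j) ^ 2 * (A0 A) j l) ^ 2))
      = fun l => if l ∈ X then (∑ j, (c j) ^ 2 * (A0 A) j l) ^ 2 else 0 := by
    funext l
    rw [Matrix.mulVec, dotProduct, Finset.sum_eq_single l]
    · rw [Matrix.diagonal_apply_eq]
      by_cases hl : l ∈ X <;> simp [hl]
    · intro k _ hkl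
      rw [Matrix.diagonal_apply_ne' _ hkl, zero_mul]
    · intro hl; exact absurd (Finset.mem_univ l) hl
  rw [hAst, hD]

lemma detGX_ne_iff_radZero (A : Matrix W V F4) (X : Finset V) :
    (GX A X).det ≠ 0 ↔ RadZero A X := by
  rw [Ne, ← Matrix.exists_mulVec_eq_zero_iff, not_exists]
  have hrow : ∀ j, ((A0 A) j : V → F4) ∈ WoS A := fun j => rowsOf_mem (WoS A) j
  constructor
  · -- no kernel vector → RadZero
    intro hc w hw hmask
    by_contra hwne
    set g : Fin (rrk A) → F4 := fun j => (Module.finBasis F4 (WoS A)).repr ⟨w, hw⟩ j with hg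
    have hwsum : ∀ l, w l = ∑ j, g j * (A0 A) j l := by
      intro l
      have h1 := (Module.finBasis F4 (WoS A)).sum_repr ⟨w, hw⟩
      have h2 := congrArg (fun u : WoS A => (u : V → F4) l) h1
      simp only [Submodule.coe_sum, Finset.sum_apply, SetLike.val_smul, Pi.smul_apply,
        smul_eq_mul] at h2
      exact h2.symm
    set c : Fin (rrk A) → F4 := fun j => (g j) ^ 2 with hc2
    apply hc c
    constructor
    · intro hc0
      apply hwne
      funext l
      rw [hwsum l]
      have hg0 : ∀ j, g j = 0 := by
        intro j
        have := congrFun hc0 j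
        rw [hc2] at this
        exact F4.sq_eq_zero.mp this
      rw [Pi.zero_apply]
      apply Finset.sum_eq_zero
      intro j _
      rw [hg0 j, zero_mul]
    · rw [GX_mulVec_eq]
      have hcc : ∀ l, (∑ j, (c j) ^ 2 * (A0 A) j l) = w l := by
        intro l
        rw [hwsum l]
        apply Finset.sum_congr rfl
        intro j _
        rw [hc2, F4.sq_sq]
      have : (fun l => if l ∈ X then (∑ j, (c j) ^ 2 * (A0 A) j l) ^ 2 else 0)
          = (fun i => if i ∈ X then (w i) ^ 2 else 0) := by
        funext l
        rw [hcc l]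
      rw [this]
      have hk : (fun i => if i ∈ X then (w i) ^ 2 else 0)
          ∈ LinearMap.ker (A0 A).mulVecLin := by
        rw [ker_A0]; exact hmask
      exact hk
  · -- RadZero → no kernel vector
    intro hrad c
    rintro ⟨hcne, hc0⟩
    set w : V → F4 := fun l => ∑ j, (c j) ^ 2 * (A0 A) j l with hwdef
    have hwW : w ∈ WoS A := by
      have : w = ∑ j, ((c j) ^ 2) • ((A0 A) j : V → F4) := by
        funext l
        rw [hwdef]
        rw [Finset.sum_apply]
        apply Finset.sum_congr rfl
        intro j _
        simp
      rw [this]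
      apply Submodule.sum_mem
      intro j _
      exact Submodule.smul_mem _ _ (hrow j)
    have hmask : (fun i => if i ∈ X then (w i) ^ 2 else 0) ∈ (↑(kerK A) : Set (V → F4)) := by
      rw [GX_mulVec_eq] at hc0
      have : (fun i => if i ∈ X then (w i) ^ 2 else 0)
          ∈ LinearMap.ker (A0 A).mulVecLin := by
        rw [LinearMap.mem_ker]
        exact hc0
      rw [ker_A0] at this
      exact this
    have hw0 := hrad w hwW hmask
    apply hcne
    have hlin := rows_A0_linIndep A
    rw [Fintype.linearIndependent_iff] at hlin
    have hz : ∑ j, ((c j) ^ 2) • ((A0 A) j : V → F4) = 0 := by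
      funext l
      rw [Finset.sum_apply]
      have := congrFun hw0 l
      rw [hwdef] at this
      simp only [Pi.zero_apply] at this ⊢
      rw [← this]
      apply Finset.sum_congr rfl
      intro j _
      simp
    funext j
    have := hlin (fun j => (c j) ^ 2) hz j
    exact F4.sq_eq_zero.mp this

end Core3

section Core4
open scoped Classical
variable {W : Type} [Fintype W]

/-- the bicycle space as a submodule -/
noncomputable def Rsub (A : Matrix W V F4) : Submodule F4 (V → F4) where
  carrier := bicycle A
  zero_mem' := by
    constructor
    · show (0 : V → F4) ∈ kerSet A
      rw [kerSet_eq]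
      exact Submodule.zero_mem _
    · show (fun i => ((0 : V → F4) i) ^ 2) ∈ orthSet (kerSet A)
      rw [orthSet_eq]
      have : (fun i => ((0 : V → F4) i) ^ 2) = (0 : V → F4) := by funext i; simp
      rw [this]
      exact Submodule.zero_mem _
  add_mem' := by
    rintro a b ⟨hak, hao⟩ ⟨hbk, hbo⟩
    rw [kerSet_eq] at hak hbk
    rw [orthSet_eq] at hao hbo
    constructor
    · rw [kerSet_eq]
      exact Submodule.add_mem _ hak hbk
    · rw [orthSet_eq]
      have : (fun i => ((a + b) i) ^ 2)
          = (fun i => (a i) ^ 2) + (fun i => (b i) ^ 2) := by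
        funext i
        simp [F4.sq_add]
      rw [this]
      exact Submodule.add_mem _ hao hbo
  smul_mem' := by
    rintro c v ⟨hvk, hvo⟩
    rw [kerSet_eq] at hvk
    rw [orthSet_eq] at hvo
    constructor
    · rw [kerSet_eq]
      exact Submodule.smul_mem _ c hvk
    · rw [orthSet_eq]
      have : (fun i => ((c • v) i) ^ 2) = (c ^ 2) • (fun i => (v i) ^ 2) := by
        funext i
        simp [mul_pow]
      rw [this]
      exact Submodule.smul_mem _ (c ^ 2) hvo

lemma coe_Rsub (A : Matrix W V F4) : (↑(Rsub A) : Set (V → F4)) = bicycle A := rfl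

lemma radZero_spaceIndep (A : Matrix W V F4) (X : Finset V) (h : RadZero A X) :
    SpaceIndep (bicycle A) X := by
  rintro v ⟨hvk, hvo⟩ hsupp
  rw [kerSet_eq] at hvk
  rw [orthSet_eq] at hvo
  set w : V → F4 := fun i => (v i) ^ 2 with hw
  have hmask : (fun i => if i ∈ X then (w i) ^ 2 else 0) ∈ (↑(kerK A) : Set (V → F4)) := by
    have : (fun i => if i ∈ X then (w i) ^ 2 else 0) = v := by
      funext i
      by_cases hi : i ∈ X
      · rw [if_pos hi, hw]
        exact F4.sq_sq (v i)
      · rw [if_neg hi]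
        by_contra hne
        exact hi (hsupp i (fun h0 => hne h0.symm))
    rw [this]
    exact hvk
  have hw0 := h w hvo hmask
  funext i
  have : w i = 0 := congrFun hw0 i
  rw [Pi.zero_apply]
  calc v i = (w i) ^ 2 := by rw [hw]; exact (F4.sq_sq (v i)).symm
    _ = 0 := by rw [this]; ring

lemma spaceBasis_radZero (A : Matrix W V F4) (X : Finset V)
    (h : X ∈ spaceBases (bicycle A)) : RadZero A X := by
  have hind : SpaceIndep (bicycle A) X :=
    (Finset.mem_filter.mp h).2.1
  intro w hw hmask
  -- step A: pairing relations
  have hstepA : ∀ ρ, ρ ∈ bicycle A → ∑ i ∈ Finset.univ \ X, w i * ρ i = 0 := by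
    rintro ρ ⟨hρk, hρo⟩
    rw [kerSet_eq] at hρk
    rw [orthSet_eq] at hρo
    -- (i) : sum over X vanishes
    have hX0 : ∑ i ∈ X, w i * ρ i = 0 := by
      have h1 : ∑ i, (fun i => if i ∈ X then (w i) ^ 2 else 0) i * ((ρ i) ^ 2) = 0 :=
        hρo _ hmask
      have h2 : ∑ i, (fun i => if i ∈ X then (w i) ^ 2 else 0) i * ((ρ i) ^ 2)
          = ∑ i ∈ X, (w i * ρ i) ^ 2 := by
        rw [← Finset.sum_filter_add_sum_filter_not Finset.univ (fun i => i ∈ X)]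
        have hz : ∑ i ∈ Finset.univ.filter (fun i => ¬ i ∈ X),
            (fun i => if i ∈ X then (w i) ^ 2 else 0) i * ((ρ i) ^ 2) = 0 := by
          apply Finset.sum_eq_zero
          intro i hi
          rw [Finset.mem_filter] at hi
          simp [hi.2]
        rw [hz, add_zero]
        rw [show Finset.univ.filter (fun i => i ∈ X) = X by
          ext i; simp]
        apply Finset.sum_congr rfl
        intro i hi
        simp only [if_pos hi, mul_pow]
      rw [h2] at h1
      rw [← F4.sq_sum] at h1
      exact F4.sq_eq_zero.mp h1
    -- (ii) : total sum vanishes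
    have hT0 : ∑ i, w i * ρ i = 0 := by
      have := hw ρ hρk
      rw [← this]
      apply Finset.sum_congr rfl
      intro i _
      ring
    have hsplit := Finset.sum_sdiff (f := fun i => w i * ρ i) (Finset.subset_univ X)
    rw [hT0] at hsplit
    rw [hX0, add_zero] at hsplit
    exact hsplit
  -- step B: w vanishes off X
  have hoffX : ∀ j ∉ X, w j = 0 := by
    intro j hj
    have hXb : X ∈ spaceBases (↑(Rsub A) : Set (V → F4)) := by
      rw [coe_Rsub]; exact h
    obtain ⟨ρ, hρ, hρval⟩ := spaceBasis_surj hXb (fun i => if i = j then 1 else 0)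
    have := hstepA ρ hρ
    rw [Finset.sum_eq_single j] at this
    · rw [hρval j hj, if_pos rfl, mul_one] at this
      exact this
    · intro i hi hij
      rw [hρval i (Finset.mem_sdiff.mp hi).2, if_neg hij, mul_zero]
    · intro hjmem
      exact absurd (Finset.mem_sdiff.mpr ⟨Finset.mem_univ j, hj⟩) hjmem
  -- step C: the masked square is itself a bicycle supported in X
  set u : V → F4 := fun i => if i ∈ X then (w i) ^ 2 else 0 with hu
  have husq : u = fun i => (w i) ^ 2 := by
    funext i
    by_cases hi : i ∈ X
    · rw [hu]; simp [hi]
    · rw [hu]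
      simp only [if_neg hi]
      rw [hoffX i hi]
      ring
  have hub : u ∈ bicycle A := by
    constructor
    · rw [kerSet_eq]
      exact hmask
    · rw [orthSet_eq]
      have : (fun i => (u i) ^ 2) = w := by
        rw [husq]
        funext i
        exact F4.sq_sq (w i)
      rw [this]
      exact hw
  have hus : ∀ i, u i ≠ 0 → i ∈ X := by
    intro i hi
    by_contra hiX
    apply hi
    rw [hu]
    simp [hiX]
  have hu0 := hind u hub hus
  funext i
  rw [Pi.zero_apply]
  by_cases hi : i ∈ X
  · have : u i = 0 := congrFun hu0 i
    rw [husq] at this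
    exact F4.sq_eq_zero.mp this
  · exact hoffX i hi

lemma spaceBases_bicycle_eq (A : Matrix W V F4) :
    spaceBases (bicycle A) = maxSS (Finset.univ.filter
      (fun X => Odd (((colBases A).filter (fun B => B ⊆ X)).card))) := by
  have hPQ : ∀ Z : Finset V, Odd (((colBases A).filter (fun B => B ⊆ Z)).card) →
      SpaceIndep (bicycle A) Z := by
    intro Z hodd
    exact radZero_spaceIndep A Z
      ((detGX_ne_iff_radZero A Z).mp ((odd_count_iff_detGX A Z).mp hodd))
  have hB : ∀ Z : Finset V, Z ∈ spaceBases (bicycle A) →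
      Odd (((colBases A).filter (fun B => B ⊆ Z)).card) := by
    intro Z hZ
    exact (odd_count_iff_detGX A Z).mpr
      ((detGX_ne_iff_radZero A Z).mpr (spaceBasis_radZero A Z hZ))
  ext X
  rw [maxSS, Finset.mem_filter]
  constructor
  · intro hX
    have hX' := (Finset.mem_filter.mp hX).2
    refine ⟨Finset.mem_filter.mpr ⟨Finset.mem_univ X, hB X hX⟩, ?_⟩
    intro Z hZ hXZ
    exact hX'.2 Z hXZ (hPQ Z (Finset.mem_filter.mp hZ).2)
  · rintro ⟨hXN, hmax⟩
    have hodd := (Finset.mem_filter.mp hXN).2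
    have hind := hPQ X hodd
    have hind' : SpaceIndep (↑(Rsub A) : Set (V → F4)) X := by
      rw [coe_Rsub]; exact hind
    obtain ⟨Y, hXY, hYb⟩ := exists_spaceBasis_superset hind'
    rw [coe_Rsub] at hYb
    have hXeqY : X = Y :=
      hmax Y (Finset.mem_filter.mpr ⟨Finset.mem_univ Y, hB Y hYb⟩) hXY
    rwa [hXeqY]

lemma odd_card_iff_bicycle_zero (A : Matrix W V F4) :
    Odd (colBases A).card ↔ ∀ v ∈ bicycle A, v = 0 := by
  have hfil : (colBases A).filter (fun B => B ⊆ (Finset.univ : Finset V)) = colBases A :=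
    Finset.filter_true_of_mem (fun B _ => Finset.subset_univ B)
  constructor
  · intro hodd
    have hodd' : Odd (((colBases A).filter
        (fun B => B ⊆ (Finset.univ : Finset V))).card) := by rwa [hfil]
    have hrad := (detGX_ne_iff_radZero A Finset.univ).mp
      ((odd_count_iff_detGX A Finset.univ).mp hodd')
    have hind := radZero_spaceIndep A Finset.univ hrad
    intro v hv
    exact hind v hv (fun i _ => Finset.mem_univ i)
  · intro hz
    have huniv : Finset.univ ∈ spaceBases (bicycle A) := by
      rw [spaceBases, Finset.mem_filter]
      refine ⟨Finset.mem_univ _, fun v hv _ => hz v hv, fun Z hZ _ => ?_⟩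
      exact (Finset.eq_univ_of_card Z (le_antisymm (Finset.card_le_univ Z)
        (by rw [← Finset.card_univ]; exact Finset.card_le_card hZ))).symm
    have hodd' := (odd_count_iff_detGX A Finset.univ).mpr
      ((detGX_ne_iff_radZero A Finset.univ).mpr (spaceBasis_radZero A Finset.univ huniv))
    rwa [hfil] at hodd'

end Core4

end Aux

/-- extension of Vertigan: for a quaternary matroid M with any
GF(4)-representation A and L = ker(A), the matroid of the bicycle space
BC_L = L ∩ inv(L^⊥) equals max(M+V); in particular M(BC_L) is independent of
the chosen representation, and M has an odd number of bases iff the bicycle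
space has dimension zero. -/
theorem bicycle_matroid_eq_max_loopC {W : Type} [Fintype W]
    (M : Finset (Finset V)) (A : Matrix W V (GaloisField 2 2))
    (hM : M = colBases A)
    (l : List V) (hnd : l.Nodup) (huniv : l.toFinset = Finset.univ) :
    spaceBases (bicycle A) = maxSS (l.foldl loopC M) ∧
    (∀ (W' : Type) (_ : Fintype W') (A' : Matrix W' V (GaloisField 2 2)),
      M = colBases A' → spaceBases (bicycle A') = spaceBases (bicycle A)) ∧
    (Odd M.card ↔ ∀ v ∈ bicycle A, v = 0) := by
  have hfold : ∀ {W' : Type} [Fintype W'] (A' : Matrix W' V (GaloisField 2 2)),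
      M = colBases A' →
      l.foldl loopC M = Finset.univ.filter
        (fun X => Odd (((colBases A').filter (fun B => B ⊆ X)).card)) := by
    intro W' _ A' hM'
    ext X
    rw [foldl_loopC M l hnd X, Finset.mem_filter, huniv]
    have : M.filter (fun B => X \ Finset.univ ⊆ B ∧ B ⊆ X)
        = (colBases A').filter (fun B => B ⊆ X) := by
      rw [hM']
      apply Finset.filter_congr
      intro B _
      constructor
      · rintro ⟨-, h2⟩; exact h2
      · intro h2
        refine ⟨?_, h2⟩
        rw [Finset.sdiff_eq_empty_iff_subset.mpr (Finset.subset_univ X)]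
        exact Finset.empty_subset B
    rw [this]
    exact ⟨fun h => ⟨Finset.mem_univ X, h⟩, fun h => h.2⟩
  refine ⟨?_, ?_, ?_⟩
  · rw [hfold A hM]
    exact spaceBases_bicycle_eq A
  · intro W' _ A' hM'
    rw [spaceBases_bicycle_eq A', spaceBases_bicycle_eq A, ← hM', ← hM]
  · rw [hM]
    exact odd_card_iff_bicycle_zero A
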